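/- Let A be an initialized DiPA and let ρ be a feasible run of A from the initial state q_init such that C=ρ[i:j] (for some 0≤i<j≤|ρ|) is a non-leaking cycle. Then for every m>0, the run ρ[0:i]·(ρ[i:j])^m·ρ[j:] is feasible. -/

import Mathlib

/-!  Formalization of DiPA (Differentially Private Automata) with multiple storage
variables, following Chadha–Sistla–Viswanathan–Bhusal. -/

/-- A guard: for each storage variable, `none` means the variable is unconstrained,
`some true` means the atomic condition `insample ≥ x_i` is a conjunct, and
`some false` means `insample < x_i` is a conjunct.  The guard `true` is `fun _ => none`. -/
abbrev Guard (k : ℕ) := Fin k → Option Bool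

/-- Satisfaction of a guard by a sampled value `z` and a valuation `η` of the
storage variables. -/
def GuardSat {k : ℕ} (c : Guard k) (z : ℝ) (η : Fin k → ℝ) : Prop :=
  ∀ i, (c i = some true → η i ≤ z) ∧ (c i = some false → z < η i)

/-- The data of a DiPA, without the axioms (used also for the augmentation).
Outputs are elements of `Γ ⊕ Bool` where `Sum.inr false` denotes `insample` and
`Sum.inr true` denotes `insample'`.  `P q = (d, μ, d', μ')`. -/
structure PreDiPA (k : ℕ) where
  Q : Type
  Γ : Type
  isInput : Q → Bool
  qinit : Q
  P : Q → ℚ × ℚ × ℚ × ℚ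
  δ : Q → Guard k → Option (Q × (Γ ⊕ Bool) × (Fin k → Bool))

namespace PreDiPA

variable {k : ℕ}

/-- A transition `t = (q, c, q', o, b)` with `δ q c = some (q', o, b)`. -/
structure Trans (A : PreDiPA k) where
  src : A.Q
  grd : Guard k
  trg : A.Q
  out : A.Γ ⊕ Bool
  asgn : Fin k → Bool
  valid : A.δ src grd = some (trg, out, asgn)

/-- Input sequences: `none` denotes `τ`. -/
abbrev InSeq := List (Option ℝ)

/-- Output sequences. -/
abbrev OutSeq (A : PreDiPA k) := List (A.Γ ⊕ EReal × EReal)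

section RunLevel

variable {A : PreDiPA k}

/-- A run is a chained sequence of transitions. -/
def IsRun (ρ : List A.Trans) : Prop :=
  List.Chain' (fun t t' => t.trg = t'.src) ρ

/-- A run starting at state `q`. -/
def IsRunFrom (q : A.Q) (ρ : List A.Trans) : Prop :=
  IsRun ρ ∧ ∀ t, ρ.head? = some t → t.src = q

/-- Whether the `i`-th transition of `ρ` assigns `insample` to `x`. -/
def assignAt (ρ : List A.Trans) (x : Fin k) (i : ℕ) : Bool :=
  (ρ[i]?).elim false fun t => t.asgn x

/-- The constraint placed on variable `x` by the guard of the `i`-th transition. -/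
def grdAt (ρ : List A.Trans) (x : Fin k) (i : ℕ) : Option Bool :=
  (ρ[i]?).elim none fun t => t.grd x

/-- `lastassign ρ x j` is the largest `i < j` such that the `i`-th transition assigns
`x`, and `⊥` (i.e. `−∞`) if there is no such `i`. -/
def lastassign (ρ : List A.Trans) (x : Fin k) (j : ℕ) : WithBot ℕ :=
  ((Finset.range j).filter fun i => assignAt ρ x i = true).max

/-- Edges of the dependency graph `G_ρ`: an edge `(j, lastassign ρ x j)` for every `j`
with `x ∈ largev(t_j)`, and an edge `(lastassign ρ x j, j)` for every `j` with
`x ∈ smallv(t_j)` (keeping only edges whose endpoints are vertices). -/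
def DepEdge (ρ : List A.Trans) (a b : ℕ) : Prop :=
  (∃ x, a < ρ.length ∧ grdAt ρ x a = some false ∧ lastassign ρ x a = (b : WithBot ℕ)) ∨
  (∃ x, b < ρ.length ∧ grdAt ρ x b = some true ∧ lastassign ρ x b = (a : WithBot ℕ))

/-- A run is feasible iff its dependency graph is acyclic. -/
def Feasible (ρ : List A.Trans) : Prop :=
  ∀ a b, DepEdge ρ a b → ¬ Relation.ReflTransGen (DepEdge ρ) b a

/-- A cycle is a run whose first state coincides with its last state. -/
def IsCycle (ρ : List A.Trans) : Prop :=
  IsRun ρ ∧ ∃ t₁ t₂, ρ.head? = some t₁ ∧ ρ.getLast? = some t₂ ∧ t₁.src = t₂.trg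

/-- A cycle `C` is non-leaking if no variable used (referenced in a guard) in `C²`
has been assigned within `C²`. -/
def NonLeakingCycle (C : List A.Trans) : Prop :=
  IsCycle C ∧ ∀ x i, grdAt (C ++ C) x i ≠ none → lastassign (C ++ C) x i = ⊥

/-- The slice `ρ[i:j]`. -/
def slice (ρ : List A.Trans) (i j : ℕ) : List A.Trans := (ρ.drop i).take (j - i)

/-- `m`-fold concatenation `C^m` of a sequence of transitions with itself. -/
def repRun (C : List A.Trans) : ℕ → List A.Trans
  | 0 => []
  | m + 1 => C ++ repRun C m

/-- `ρ` is a run on input sequence `σ` producing output sequence `γ`. -/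
def IsRunOn (ρ : List A.Trans) (σ : InSeq) (γ : OutSeq A) : Prop :=
  ρ.length = σ.length ∧ ρ.length = γ.length ∧
  ∀ (i : ℕ) (t : A.Trans), ρ[i]? = some t →
    (σ[i]? = some none ↔ A.isInput t.src = false) ∧
    (∀ g : A.Γ, t.out = Sum.inl g → γ[i]? = some (Sum.inl g)) ∧
    (∀ b : Bool, t.out = Sum.inr b → ∃ p : EReal × EReal, γ[i]? = some (Sum.inr p))

end RunLevel

/-- Integral of `f` over the open interval `(l, u)` with extended-real endpoints
(`0` if the interval is empty). -/
noncomputable def intE (l u : EReal) (f : ℝ → ℝ) : ℝ :=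
  ∫ z in {z : ℝ | l < (z : EReal) ∧ (z : EReal) < u}, f z

/-- The density of the Laplace distribution with scale `s` and mean `m`. -/
noncomputable def lap (s m z : ℝ) : ℝ := s / 2 * Real.exp (-s * |z - m|)

section ProbDef

variable {A : PreDiPA k}

/-- `Prob ε ρ σ γ η` is the probability of the computation `κ = (ρ, σ, γ)` for the
privacy budget `ε` and the initial valuation `η`. -/
noncomputable def Prob (ε : ℝ) : List A.Trans → InSeq → OutSeq A → (Fin k → ℝ) → ℝ
  | [], _, _, _ => 1
  | t :: ρ, σ, γ, η =>
    let d : ℝ := ((A.P t.src).1 : ℝ)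
    let μ : ℝ := ((A.P t.src).2.1 : ℝ)
    let d' : ℝ := ((A.P t.src).2.2.1 : ℝ)
    let μ' : ℝ := ((A.P t.src).2.2.2 : ℝ)
    let a0 : ℝ := match σ.head? with | some (some a) => a | _ => 0
    let lu : EReal × EReal := match γ.head? with | some (Sum.inr p) => p | _ => (⊥, ⊤)
    let smax : EReal :=
      (Finset.univ.filter fun i => t.grd i = some true).sup fun i => ((η i : ℝ) : EReal)
    let lmin : EReal :=
      (Finset.univ.filter fun i => t.grd i = some false).inf fun i => ((η i : ℝ) : EReal)
    match t.out with
    | Sum.inr true =>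
        intE lu.1 lu.2 (fun z => lap (d' * ε) (μ' + a0) z) *
        intE smax lmin (fun z => lap (d * ε) (μ + a0) z *
          Prob ε ρ σ.tail γ.tail fun i => if t.asgn i then z else η i)
    | _ =>
        intE (max smax lu.1) (min lmin lu.2) (fun z => lap (d * ε) (μ + a0) z *
          Prob ε ρ σ.tail γ.tail fun i => if t.asgn i then z else η i)

end ProbDef

/-- Adjacency of single entries of input sequences. -/
def AdjEntry : Option ℝ → Option ℝ → Prop
  | some a, some b => |a - b| ≤ 1
  | none, none => True
  | _, _ => False

/-- Adjacency of input sequences. -/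
def Adjacent (σ₁ σ₂ : InSeq) : Prop := List.Forall₂ AdjEntry σ₁ σ₂

/-- The total probability, over all runs from the initial state on `σ` producing `γ`,
of the respective computations.  (For runs from the initial state of an initialized
automaton, `Prob` does not depend on the initial valuation, so we fix it to be `0`.) -/
noncomputable def runProbSum (A : PreDiPA k) (ε : ℝ) (σ : InSeq) (γ : OutSeq A) : ℝ :=
  ∑' ρ : {ρ : List A.Trans // IsRunFrom A.qinit ρ ∧ IsRunOn ρ σ γ},
    Prob ε ρ.val σ γ fun _ => 0

/-- `A` is `D·ε`-differentially private. -/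
def DPat (A : PreDiPA k) (D ε : ℝ) : Prop :=
  ∀ σ₁ σ₂ (γ : OutSeq A), Adjacent σ₁ σ₂ →
    runProbSum A ε σ₁ γ ≤ Real.exp (D * ε) * runProbSum A ε σ₂ γ

/-- `A` is differentially private. -/
def DiffPrivate (A : PreDiPA k) : Prop := ∃ D > (0 : ℝ), ∀ ε > (0 : ℝ), DPat A D ε

/-- `A` is initialized: on every run from the initial state, every variable referenced
in a guard has been assigned by an earlier transition. -/
def Initialized (A : PreDiPA k) : Prop :=
  ∀ ρ : List A.Trans, IsRunFrom A.qinit ρ →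
    ∀ i x, grdAt ρ x i ≠ none → ∃ j < i, assignAt ρ x j = true

section BadRuns

variable {A : PreDiPA k}

/-- A leaking cycle. -/
def LeakingCycle (ρ : List A.Trans) : Prop :=
  IsRunFrom A.qinit ρ ∧
  ∃ j < ρ.length, IsCycle (ρ.drop j) ∧
    (∃ i₁ i₂ x, j ≤ i₁ ∧ j ≤ i₂ ∧ assignAt ρ x i₁ = true ∧ grdAt ρ x i₂ ≠ none) ∧
    ∀ m : ℕ, Feasible (ρ ++ repRun (ρ.drop j) m)

/-- A leaking pair. -/
def LeakingPair (ρ : List A.Trans) : Prop :=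
  IsRunFrom A.qinit ρ ∧ Feasible ρ ∧
  ∃ i₁ j₁ i₂ j₂ : ℕ, i₁ < j₁ ∧ j₁ ≤ ρ.length ∧ i₂ < j₂ ∧ j₂ ≤ ρ.length ∧
    NonLeakingCycle (slice ρ i₁ j₁) ∧ NonLeakingCycle (slice ρ i₂ j₂) ∧
    (j₁ ≤ i₂ ∨ j₂ ≤ i₁) ∧
    ∃ ks : List ℕ, 2 ≤ ks.length ∧ List.Chain' (DepEdge ρ) ks ∧
      i₁ ≤ ks.head! ∧ ks.head! < j₁ ∧ i₂ ≤ ks.getLast! ∧ ks.getLast! < j₂ ∧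
      ks[1]! < ks.head! ∧ ks[ks.length - 2]! < ks.getLast!

/-- A disclosing cycle. -/
def DisclosingCycle (ρ : List A.Trans) : Prop :=
  IsRunFrom A.qinit ρ ∧ Feasible ρ ∧
  ∃ j i : ℕ, j ≤ i ∧ i < ρ.length ∧ NonLeakingCycle (ρ.drop j) ∧
    ∃ t, ρ[i]? = some t ∧ A.isInput t.src = true ∧ ∃ b : Bool, t.out = Sum.inr b

/-- A privacy violating path. -/
def PrivacyViolating (ρ : List A.Trans) : Prop :=
  IsRunFrom A.qinit ρ ∧ Feasible ρ ∧
  ∃ i j : ℕ, i ≤ j ∧ j ≤ ρ.length ∧ NonLeakingCycle (slice ρ i j) ∧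
    ∃ ks : List ℕ, 2 ≤ ks.length ∧ List.Chain' (DepEdge ρ) ks ∧
      (((∃ t, ρ[ks.head!]? = some t ∧ t.out = Sum.inr false) ∧
          ks[ks.length - 2]! < ks.getLast! ∧ i ≤ ks.getLast! ∧ ks.getLast! < j) ∨
       (i ≤ ks.head! ∧ ks.head! < j ∧ ks[1]! < ks.head! ∧
          ∃ t, ρ[ks.getLast!]? = some t ∧ t.out = Sum.inr false))

/-- A feasible run is strongly feasible if the sampling means at non-input positions
respect the order imposed by the dependency graph. -/
def StronglyFeasible (ρ : List A.Trans) : Prop :=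
  Feasible ρ ∧
  ∀ i j ti tj, Relation.TransGen (DepEdge ρ) i j → ρ[i]? = some ti → ρ[j]? = some tj →
    A.isInput ti.src = false → A.isInput tj.src = false →
    (A.P ti.src).2.1 < (A.P tj.src).2.1

end BadRuns

/-- `A` is well-formed: no leaking cycles, leaking pairs, disclosing cycles or
privacy violating paths. -/
def WellFormed (A : PreDiPA k) : Prop :=
  (∀ ρ : List A.Trans, ¬ LeakingCycle ρ) ∧ (∀ ρ : List A.Trans, ¬ LeakingPair ρ) ∧
  (∀ ρ : List A.Trans, ¬ DisclosingCycle ρ) ∧ (∀ ρ : List A.Trans, ¬ PrivacyViolating ρ)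

/-- Output distinction. -/
def OutputDistinct (A : PreDiPA k) : Prop :=
  ∀ t₁ t₂ : A.Trans, t₁ ≠ t₂ → t₁.src = t₂.src →
    t₁.out ≠ t₂.out ∧ ((∃ g, t₁.out = Sum.inl g) ∨ (∃ g, t₂.out = Sum.inl g))

/-- The strong feasibility assumption: every feasible run from the initial state is
strongly feasible. -/
def StrongFeasibility (A : PreDiPA k) : Prop :=
  ∀ ρ : List A.Trans, IsRunFrom A.qinit ρ → Feasible ρ → StronglyFeasible ρ

end PreDiPA

/-- A DiPA: a `PreDiPA` whose state space and output alphabet are finite, whose scale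
parameters are nonnegative, which is deterministic (guards of distinct transitions
from the same state are jointly unsatisfiable) and in which all transitions from
non-input states carry the guard `true`. -/
structure DiPA (k : ℕ) extends PreDiPA k where
  finQ : Finite Q
  finΓ : Finite Γ
  dNonneg : ∀ q, 0 ≤ (P q).1
  d'Nonneg : ∀ q, 0 ≤ (P q).2.2.1
  determinism : ∀ q c c' r r', δ q c = some r → δ q c' = some r' → c ≠ c' →
    ¬ ∃ (z : ℝ) (η : Fin k → ℝ), GuardSat c z η ∧ GuardSat c' z η
  noninput_true : ∀ q c r, isInput q = false → δ q c = some r → c = fun _ => none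

open PreDiPA


section AuxRepeat

variable {k : ℕ} {A : PreDiPA k}

private lemma assignAt_congr' {ρ₁ ρ₂ : List A.Trans} {p q : ℕ} (h : ρ₁[p]? = ρ₂[q]?)
    (x : Fin k) : assignAt ρ₁ x p = assignAt ρ₂ x q := by
  unfold assignAt; rw [h]

private lemma grdAt_congr' {ρ₁ ρ₂ : List A.Trans} {p q : ℕ} (h : ρ₁[p]? = ρ₂[q]?)
    (x : Fin k) : grdAt ρ₁ x p = grdAt ρ₂ x q := by
  unfold grdAt; rw [h]

private lemma grdAt_of_ge' {ρ : List A.Trans} {x : Fin k} {p : ℕ} (h : ρ.length ≤ p) :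
    grdAt ρ x p = none := by
  unfold grdAt; rw [List.getElem?_eq_none h]; rfl

private lemma lastassign_eq_coe_iff' {ρ : List A.Trans} {x : Fin k} {p b : ℕ} :
    lastassign ρ x p = (b : WithBot ℕ) ↔
      b < p ∧ assignAt ρ x b = true ∧ ∀ r, b < r → r < p → assignAt ρ x r = false := by
  unfold lastassign
  constructor
  · intro h
    have hb := Finset.mem_of_max h
    simp only [Finset.mem_filter, Finset.mem_range] at hb
    refine ⟨hb.1, hb.2, fun r hbr hrp => ?_⟩
    by_contra hr
    have hr' : r ∈ (Finset.range p).filter fun i => assignAt ρ x i = true := by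
      simp only [Finset.mem_filter, Finset.mem_range]
      exact ⟨hrp, by simpa using hr⟩
    have h2 := Finset.le_max hr'
    rw [h] at h2
    have h3 : r ≤ b := WithBot.coe_le_coe.mp h2
    omega
  · rintro ⟨hbp, hba, hmax⟩
    apply le_antisymm
    · apply Finset.max_le
      intro a ha
      simp only [Finset.mem_filter, Finset.mem_range] at ha
      rcases Nat.lt_or_ge b a with hba' | hba'
      · rw [hmax a hba' ha.1] at ha
        simp at ha
      · exact WithBot.coe_le_coe.mpr hba'
    · exact Finset.le_max
        (by simp only [Finset.mem_filter, Finset.mem_range]; exact ⟨hbp, hba⟩)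

private lemma lastassign_eq_bot_iff' {ρ : List A.Trans} {x : Fin k} {p : ℕ} :
    lastassign ρ x p = ⊥ ↔ ∀ r, r < p → assignAt ρ x r = false := by
  unfold lastassign
  rw [Finset.max_eq_bot, Finset.filter_eq_empty_iff]
  constructor
  · intro h r hr
    simpa using h (Finset.mem_range.mpr hr)
  · intro h r hr
    simp [h r (Finset.mem_range.mp hr)]

private lemma repRun_length' (C : List A.Trans) (m : ℕ) :
    (repRun C m).length = m * C.length := by
  induction m with
  | zero => simp [repRun]
  | succ n ih =>
    have : (n + 1) * C.length = n * C.length + C.length := by ring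
    simp only [repRun, List.length_append, ih]
    omega

private lemma repRun_getElem?' (C : List A.Trans) :
    ∀ m r : ℕ, r < m * C.length → (repRun C m)[r]? = C[r % C.length]? := by
  intro m
  induction m with
  | zero => intro r h; exact absurd h (by simp)
  | succ n ih =>
    intro r h
    show (C ++ repRun C n)[r]? = _
    rcases lt_or_ge r C.length with h1 | h1
    · rw [List.getElem?_append_left h1, Nat.mod_eq_of_lt h1]
    · rw [List.getElem?_append_right h1, Nat.mod_eq_sub_mod h1]
      refine ih _ ?_
      have h2 : (n + 1) * C.length = n * C.length + C.length := by ring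
      omega

/-- Position translation from the pumped run back to the original run. -/
private def auxF (i j n p : ℕ) : ℕ :=
  if p < i then p else if p < i + (n + 1) * (j - i) then i + (p - i) % (j - i)
  else p - n * (j - i)

/-- Position translation from the original run into the pumped run. -/
private def auxG (i j n r : ℕ) : ℕ := if r < i then r else r + n * (j - i)

end AuxRepeat

theorem nonLeakingCycle_repeatable {k : ℕ} (A : DiPA k)
    (hinit : Initialized A.toPreDiPA)
    (ρ : List A.toPreDiPA.Trans)
    (hrun : IsRunFrom A.toPreDiPA.qinit ρ)
    (hfeas : Feasible ρ)
    (i j : ℕ) (hij : i < j) (hj : j ≤ ρ.length)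
    (hC : NonLeakingCycle (slice ρ i j)) :
    ∀ m : ℕ, 0 < m →
      Feasible (ρ.take i ++ repRun (slice ρ i j) m ++ ρ.drop j) := by
  intro m hm
  obtain ⟨n, rfl⟩ : ∃ n, m = n + 1 := ⟨m - 1, by omega⟩
  set C : List A.toPreDiPA.Trans := slice ρ i j with hCdef
  set ρ' : List A.toPreDiPA.Trans := ρ.take i ++ repRun C (n + 1) ++ ρ.drop j with hρ'def
  have hLpos : 0 < j - i := by omega
  have hmul : (n + 1) * (j - i) = n * (j - i) + (j - i) := by ring
  have hClen : C.length = j - i := by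
    simp only [hCdef, PreDiPA.slice, List.length_take, List.length_drop]
    omega
  have hC_get : ∀ s, s < j - i → C[s]? = ρ[i + s]? := by
    intro s hs
    simp only [hCdef, PreDiPA.slice, List.getElem?_take_of_lt hs, List.getElem?_drop]
  have hlen' : ρ'.length = i + (n + 1) * (j - i) + (ρ.length - j) := by
    simp only [hρ'def, List.length_append, List.length_take, List.length_drop,
      repRun_length', hClen]
    omega
  -- the forward position translation
  have hF : ∀ p, ρ'[p]? = ρ[auxF i j n p]? := by
    intro p
    by_cases h1 : p < i
    · rw [auxF, if_pos h1, hρ'def,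
        List.getElem?_append_left
          (by simp only [List.length_append, List.length_take, repRun_length', hClen]; omega),
        List.getElem?_append_left (by simp only [List.length_take]; omega),
        List.getElem?_take_of_lt h1]
    · by_cases h2 : p < i + (n + 1) * (j - i)
      · have htk : (ρ.take i).length = i := by simp only [List.length_take]; omega
        rw [auxF, if_neg h1, if_pos h2, hρ'def,
          List.getElem?_append_left
            (by simp only [List.length_append, List.length_take, repRun_length', hClen]; omega),
          List.getElem?_append_right (by omega : (ρ.take i).length ≤ p), htk,
          repRun_getElem?' C (n + 1) (p - i) (by rw [hClen]; omega), hClen,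
          hC_get _ (Nat.mod_lt _ hLpos)]
      · have htk : (ρ.take i ++ repRun C (n + 1)).length = i + (n + 1) * (j - i) := by
          simp only [List.length_append, List.length_take, repRun_length', hClen]; omega
        rw [auxF, if_neg h1, if_neg h2, hρ'def,
          List.getElem?_append_right (htk ▸ (by omega) :
            (ρ.take i ++ repRun C (n + 1)).length ≤ p),
          htk, List.getElem?_drop]
        congr 1
        omega
  have hFlt : ∀ a, a < ρ'.length → auxF i j n a < ρ.length := by
    intro a ha
    rw [hlen'] at ha
    unfold auxF
    split_ifs with h1 h2
    · omega
    · have := Nat.mod_lt (a - i) hLpos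
      omega
    · omega
  -- the reverse position translation
  have hFG : ∀ r, auxF i j n (auxG i j n r) = r := by
    intro r
    unfold auxG auxF
    by_cases h1 : r < i
    · simp [h1]
    · rw [if_neg h1, if_neg (by omega : ¬ r + n * (j - i) < i)]
      by_cases h2 : r < j
      · rw [if_pos (by omega),
          show r + n * (j - i) - i = (r - i) + n * (j - i) by omega,
          Nat.add_mul_mod_self_right, Nat.mod_eq_of_lt (by omega)]
        omega
      · rw [if_neg (by omega)]
        omega
  have hG : ∀ r, ρ'[auxG i j n r]? = ρ[r]? := fun r => by rw [hF, hFG]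
  have hGiff : ∀ r₁ r₂, auxG i j n r₁ < auxG i j n r₂ ↔ r₁ < r₂ := by
    intro r₁ r₂; unfold auxG; split_ifs <;> omega
  -- variables used in C are never assigned in C
  have hCno : ∀ x : Fin k, (∃ q, grdAt C x q ≠ none) → ∀ s, s < j - i →
      assignAt ρ x (i + s) = false := by
    rintro x ⟨q, hq⟩ s hs
    have hqlt : q < C.length := by
      by_contra h
      exact hq (grdAt_of_ge' (by omega))
    have happ : (C ++ C)[q + C.length]? = C[q]? := by
      rw [List.getElem?_append_right (by omega)]
      congr 1
      omega
    have hgrd2 : grdAt (C ++ C) x (q + C.length) ≠ none := by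
      rwa [grdAt_congr' happ x]
    have hbot := lastassign_eq_bot_iff'.mp (hC.2 x (q + C.length) hgrd2) s (by omega)
    rwa [assignAt_congr' ((List.getElem?_append_left (by omega : s < C.length)).trans
      (hC_get s hs) : (C ++ C)[s]? = ρ[i + s]?) x] at hbot
  -- key lemma: lastassign transfers along auxF
  have hE : ∀ (x : Fin k) (p b : ℕ), grdAt ρ' x p ≠ none →
      lastassign ρ' x p = ((b : ℕ) : WithBot ℕ) →
      lastassign ρ x (auxF i j n p) = ((auxF i j n b : ℕ) : WithBot ℕ) := by
    intro x p b hgrd hlast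
    rw [lastassign_eq_coe_iff'] at hlast ⊢
    obtain ⟨hbp, hba, hmax⟩ := hlast
    have hA : ∀ q, assignAt ρ' x q = assignAt ρ x (auxF i j n q) :=
      fun q => assignAt_congr' (hF q) x
    have hAg : ∀ q, assignAt ρ' x (auxG i j n q) = assignAt ρ x q :=
      fun q => assignAt_congr' (hG q) x
    by_cases hp1 : p < i
    · have hFp : auxF i j n p = p := by unfold auxF; rw [if_pos hp1]
      have hFb : auxF i j n b = b := by unfold auxF; rw [if_pos (by omega)]
      rw [hFp, hFb]
      refine ⟨hbp, by rw [← hFb, ← hA b]; exact hba, fun r h1 h2 => ?_⟩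
      have hFr : auxF i j n r = r := by unfold auxF; rw [if_pos (by omega)]
      rw [← hFr, ← hA r]
      exact hmax r h1 h2
    · by_cases hp2 : p < i + (n + 1) * (j - i)
      · -- p inside the pumped region
        have hFp : auxF i j n p = i + (p - i) % (j - i) := by
          unfold auxF; rw [if_neg hp1, if_pos hp2]
        have hsl : (p - i) % (j - i) < j - i := Nat.mod_lt _ hLpos
        have hused : ∃ q, grdAt C x q ≠ none := by
          refine ⟨(p - i) % (j - i), ?_⟩
          rw [grdAt_congr' (hC_get _ hsl) x, ← hFp, ← grdAt_congr' (hF p) x]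
          exact hgrd
        have hno := hCno x hused
        have hnoMid : ∀ q, i ≤ q → q < j → assignAt ρ x q = false := by
          intro q h1 h2
          have := hno (q - i) (by omega)
          rwa [show i + (q - i) = q by omega] at this
        have hbi : b < i := by
          by_contra h
          have hFb : auxF i j n b = i + (b - i) % (j - i) := by
            unfold auxF; rw [if_neg (by omega), if_pos (by omega)]
          have h2 := hA b
          rw [hba, hFb, hno _ (Nat.mod_lt _ hLpos)] at h2
          exact absurd h2 (by simp)
        have hFb : auxF i j n b = b := by unfold auxF; rw [if_pos hbi]
        rw [hFp, hFb]
        refine ⟨by omega, by rw [← hFb, ← hA b]; exact hba, fun r h1 h2 => ?_⟩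
        by_cases hri : r < i
        · have hFr : auxF i j n r = r := by unfold auxF; rw [if_pos hri]
          rw [← hFr, ← hA r]
          exact hmax r h1 (by omega)
        · exact hnoMid r (by omega) (by omega)
      · -- p in the tail
        have hFp : auxF i j n p = p - n * (j - i) := by
          unfold auxF; rw [if_neg hp1, if_neg hp2]
        -- the maximal assignment cannot be in a non-final copy of C
        have hbtop : b < i ∨ i + n * (j - i) ≤ b := by
          by_contra h
          push_neg at h
          have hFbL : auxF i j n (b + (j - i)) = auxF i j n b := by
            unfold auxF
            rw [if_neg (by omega), if_pos (by omega), if_neg (by omega), if_pos (by omega),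
              show b + (j - i) - i = (b - i) + (j - i) by omega, Nat.add_mod_right]
          have h1 := hmax (b + (j - i)) (by omega) (by omega)
          rw [hA (b + (j - i)), hFbL, ← hA b, hba] at h1
          exact absurd h1 (by simp)
        have hGFb : auxG i j n (auxF i j n b) = b := by
          rcases hbtop with h | h
          · unfold auxF auxG; rw [if_pos h, if_pos h]
          · by_cases h2 : b < i + (n + 1) * (j - i)
            · have hmod : (b - i) % (j - i) = b - i - n * (j - i) := by
                conv_lhs => rw [show b - i = (b - i - n * (j - i)) + n * (j - i) by omega]
                rw [Nat.add_mul_mod_self_right, Nat.mod_eq_of_lt (by omega)]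
              unfold auxF auxG
              rw [if_neg (show ¬ b < i by omega), if_pos h2, hmod,
                if_neg (show ¬ i + (b - i - n * (j - i)) < i by omega)]
              omega
            · unfold auxF auxG
              rw [if_neg (show ¬ b < i by omega), if_neg h2,
                if_neg (show ¬ b - n * (j - i) < i by omega)]
              omega
        have hGFp : auxG i j n (auxF i j n p) = p := by
          unfold auxG
          rw [hFp, if_neg (by omega)]
          omega
        refine ⟨?_, ?_, ?_⟩
        · rw [← hGiff, hGFb, hGFp]; exact hbp
        · rw [← hAg (auxF i j n b), hGFb]; exact hba
        · intro r h1 h2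
          rw [← hAg r]
          refine hmax _ ?_ ?_
          · rw [← hGFb, hGiff]; exact h1
          · rw [← hGFp, hGiff]; exact h2
  -- dependency edges transfer along auxF
  have hmap : ∀ a b, DepEdge ρ' a b → DepEdge ρ (auxF i j n a) (auxF i j n b) := by
    rintro a b (⟨x, hl, hg, hla⟩ | ⟨x, hl, hg, hla⟩)
    · exact Or.inl ⟨x, hFlt a hl, by rw [← grdAt_congr' (hF a) x]; exact hg,
        hE x a b (by rw [hg]; simp) hla⟩
    · exact Or.inr ⟨x, hFlt b hl, by rw [← grdAt_congr' (hF b) x]; exact hg,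
        hE x b a (by rw [hg]; simp) hla⟩
  intro a b hedge hpath
  exact hfeas (auxF i j n a) (auxF i j n b) (hmap a b hedge)
    (Relation.ReflTransGen.lift (auxF i j n) hmap _ _ hpath)
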